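/- Let C = ∂(X) be a separating cut of a matching covered graph G, and let e be an edge of G not in C. If e is removable in both C-contractions of G, then e is removable in G. -/

import Mathlib

open SimpleGraph

universe u

/-- A graph has a perfect matching. -/
def HasPM {V : Type u} (G : SimpleGraph V) : Prop :=
  ∃ M : G.Subgraph, M.IsPerfectMatching

/-- A connected graph with at least two vertices in which every edge
lies in a perfect matching. -/
def MatchingCovered {V : Type u} (G : SimpleGraph V) : Prop :=
  G.Connected ∧ 2 ≤ Nat.card V ∧
    ∀ e ∈ G.edgeSet, ∃ M : G.Subgraph, M.IsPerfectMatching ∧ e ∈ M.edgeSet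

/-- Number of odd connected components. -/
noncomputable def oddComps {V : Type u} (G : SimpleGraph V) : ℕ :=
  Nat.card {c : G.ConnectedComponent // Odd (Nat.card c.supp)}

/-- An edge is removable if its deletion leaves a matching covered graph. -/
def Removable {V : Type u} (G : SimpleGraph V) (e : Sym2 V) : Prop :=
  e ∈ G.edgeSet ∧ MatchingCovered (G.deleteEdges {e})

/-- Removable, with absent edges counted as removable. -/
def RemovableExt {V : Type u} (G : SimpleGraph V) (e : Sym2 V) : Prop :=
  e ∉ G.edgeSet ∨ Removable G e

/-- Degree of a vertex. -/
noncomputable def degN {V : Type u} (G : SimpleGraph V) (v : V) : ℕ :=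
  Nat.card (G.neighborSet v)

/-- A graph on at least four vertices is bicritical if deleting any two
distinct vertices leaves a graph with a perfect matching. -/
def Bicritical {V : Type u} (G : SimpleGraph V) : Prop :=
  4 ≤ Nat.card V ∧ ∀ u v : V, u ≠ v → HasPM (G.induce ({u, v}ᶜ : Set V))

/-- A barrier: nonempty set `B` with `o(G - B) = |B|`. -/
def IsBarrier {V : Type u} (G : SimpleGraph V) (B : Set V) : Prop :=
  B.Nonempty ∧ oddComps (G.induce (Bᶜ : Set V)) = B.ncard

/-- 2-connectedness. -/
def TwoConnected {V : Type u} (G : SimpleGraph V) : Prop :=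
  3 ≤ Nat.card V ∧ ∀ s : Set V, s.ncard ≤ 1 → (G.induce (sᶜ : Set V)).Connected

/-- 3-connectedness. -/
def ThreeConnected {V : Type u} (G : SimpleGraph V) : Prop :=
  4 ≤ Nat.card V ∧ ∀ s : Set V, s.ncard ≤ 2 → (G.induce (sᶜ : Set V)).Connected

/-- A brick is a 3-connected bicritical graph. -/
def IsBrick {V : Type u} (G : SimpleGraph V) : Prop :=
  ThreeConnected G ∧ Bicritical G

/-- Map a vertex to the vertex set of the contraction `G/X`. -/
noncomputable def toContract {V : Type u} (X : Set V) (v : V) : ↥(Xᶜ) ⊕ Unit := by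
  classical exact if h : v ∈ X then Sum.inr () else Sum.inl ⟨v, h⟩

/-- Contraction `G/X` of the set `X` to a single vertex. -/
noncomputable def contract {V : Type u} (G : SimpleGraph V) (X : Set V) :
    SimpleGraph (↥(Xᶜ) ⊕ Unit) :=
  SimpleGraph.fromRel (fun a b =>
    ∃ x y, G.Adj x y ∧ a = toContract X x ∧ b = toContract X y)

/-- The edge cut `∂(X)`. -/
def cutEdges {V : Type u} (G : SimpleGraph V) (X : Set V) : Set (Sym2 V) :=
  {e | e ∈ G.edgeSet ∧ ∃ x y, e = s(x, y) ∧ x ∈ X ∧ y ∉ X}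

/-- A tight cut: every perfect matching meets it in exactly one edge. -/
def IsTightCut {V : Type u} (G : SimpleGraph V) (X : Set V) : Prop :=
  ∀ M : G.Subgraph, M.IsPerfectMatching → (cutEdges G X ∩ M.edgeSet).ncard = 1

/-- A separating cut: both contractions are matching covered. -/
def IsSeparatingCut {V : Type u} (G : SimpleGraph V) (X : Set V) : Prop :=
  MatchingCovered (contract G X) ∧ MatchingCovered (contract G Xᶜ)

/-- `(A, B)` is a bipartition of `G`. -/
def IsBipartition {V : Type u} (G : SimpleGraph V) (A B : Set V) : Prop :=
  A ∪ B = Set.univ ∧ A ∩ B = ∅ ∧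
    ∀ u v : V, G.Adj u v → (u ∈ A ∧ v ∈ B) ∨ (u ∈ B ∧ v ∈ A)

/-- A P-set of a bipartite matching covered graph with bipartition `(A, B)`. -/
def IsPSet {V : Type u} (G : SimpleGraph V) (A B X : Set V) : Prop :=
  (X ∩ A).ncard = (X ∩ B).ncard ∧
    ((∃! p : V × V, p.1 ∈ X ∩ A ∧ p.2 ∈ B \ X ∧ G.Adj p.1 p.2) ∨
     (∃! p : V × V, p.1 ∈ A \ X ∧ p.2 ∈ X ∩ B ∧ G.Adj p.1 p.2))

section Helpers

variable {V : Type u}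

lemma toContract_of_mem {Y : Set V} {v : V} (h : v ∈ Y) : toContract Y v = Sum.inr () := by
  simp [toContract, h]

lemma toContract_of_not_mem {Y : Set V} {v : V} (h : v ∈ Yᶜ) : toContract Y v = Sum.inl ⟨v, h⟩ := by
  rw [toContract, dif_neg h]

lemma toContract_eq_inl {Y : Set V} {v : V} {p : ↥(Yᶜ)} : toContract Y v = Sum.inl p ↔ v = ↑p := by
  classical
  constructor
  · intro h
    by_cases hv : v ∈ Y
    · rw [toContract_of_mem hv] at h; exact absurd h (by simp)
    · rw [toContract_of_not_mem hv] at h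
      simpa using congrArg (Sum.elim Subtype.val (fun _ => v)) h
  · rintro rfl
    exact toContract_of_not_mem p.2

lemma toContract_eq_inr {Y : Set V} {v : V} : toContract Y v = Sum.inr () ↔ v ∈ Y := by
  constructor
  · intro h
    by_cases hv : v ∈ Y
    · exact hv
    · rw [toContract_of_not_mem hv] at h; exact absurd h (by simp)
  · exact toContract_of_mem

lemma contract_adj_inl_inl {G : SimpleGraph V} {Y : Set V} {u v : V} (hu : u ∈ Yᶜ) (hv : v ∈ Yᶜ) :
    (contract G Y).Adj (Sum.inl ⟨u, hu⟩) (Sum.inl ⟨v, hv⟩) ↔ G.Adj u v := by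
  rw [contract, fromRel_adj]
  constructor
  · rintro ⟨hne, ⟨a, b, hab, h1, h2⟩ | ⟨a, b, hab, h1, h2⟩⟩ <;>
    · rw [eq_comm, toContract_eq_inl] at h1 h2
      subst h1; subst h2; first | exact hab | exact hab.symm
  · intro h
    refine ⟨by simpa [Subtype.ext_iff] using h.ne, Or.inl ⟨u, v, h, ?_, ?_⟩⟩ <;>
      rw [eq_comm, toContract_eq_inl]

lemma contract_adj_inl_inr {G : SimpleGraph V} {Y : Set V} {u : V} (hu : u ∈ Yᶜ) :
    (contract G Y).Adj (Sum.inl ⟨u, hu⟩) (Sum.inr ()) ↔ ∃ b ∈ Y, G.Adj u b := by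
  rw [contract, fromRel_adj]
  constructor
  · rintro ⟨hne, ⟨a, b, hab, h1, h2⟩ | ⟨a, b, hab, h1, h2⟩⟩
    · rw [eq_comm, toContract_eq_inl] at h1
      rw [eq_comm, toContract_eq_inr] at h2
      subst h1; exact ⟨b, h2, hab⟩
    · rw [eq_comm, toContract_eq_inl] at h2
      rw [eq_comm, toContract_eq_inr] at h1
      subst h2; exact ⟨a, h1, hab.symm⟩
  · rintro ⟨b, hb, hab⟩
    exact ⟨by simp, Or.inl ⟨u, b, hab, (toContract_of_not_mem hu).symm, (toContract_of_mem hb).symm⟩⟩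

end Helpers

section Glue
variable {V : Type u}

lemma glue {G : SimpleGraph V} {Y : Set V} {x y a b : V}
    (hx : x ∈ Yᶜ) (hy : y ∈ Yᶜ) (ha : a ∈ Yᶜ) (hb : b ∈ Y) (hbb : b ∈ Yᶜᶜ) (hab : G.Adj a b)
    {M1 : ((contract G Y).deleteEdges {s(Sum.inl ⟨x, hx⟩, Sum.inl ⟨y, hy⟩)}).Subgraph}
    (hM1 : M1.IsPerfectMatching)
    {M2 : (contract G Yᶜ).Subgraph} (hM2 : M2.IsPerfectMatching)
    (hgM1 : M1.Adj (Sum.inl ⟨a, ha⟩) (Sum.inr ()))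
    (hgM2 : M2.Adj (Sum.inl ⟨b, hbb⟩) (Sum.inr ())) :
    ∃ M : (G.deleteEdges {s(x, y)}).Subgraph, M.IsPerfectMatching ∧
      (∀ u v (hu : u ∈ Yᶜ) (hv : v ∈ Yᶜ),
        M1.Adj (Sum.inl ⟨u, hu⟩) (Sum.inl ⟨v, hv⟩) → M.Adj u v) ∧
      (∀ u v (hu : u ∈ Yᶜᶜ) (hv : v ∈ Yᶜᶜ),
        M2.Adj (Sum.inl ⟨u, hu⟩) (Sum.inl ⟨v, hv⟩) → M.Adj u v) ∧
      M.Adj a b := by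
  classical
  have hane : a ≠ b := fun h => (h ▸ ha : b ∈ Yᶜ) hb
  have hbx : b ≠ x := fun h => (h ▸ hx : b ∈ Yᶜ) hb
  have hby : b ≠ y := fun h => (h ▸ hy : b ∈ Yᶜ) hb
  have hM1G : ∀ (u v : V) (hu : u ∈ Yᶜ) (hv : v ∈ Yᶜ),
      M1.Adj (Sum.inl ⟨u, hu⟩) (Sum.inl ⟨v, hv⟩) →
        G.Adj u v ∧ s(u, v) ≠ s(x, y) := by
    intro u v hu hv h
    have h' := M1.adj_sub h
    rw [deleteEdges_adj] at h'
    refine ⟨(contract_adj_inl_inl hu hv).mp h'.1, ?_⟩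
    intro hc
    apply h'.2
    rw [Sym2.eq_iff] at hc
    simp only [Set.mem_singleton_iff, Sym2.eq_iff]
    rcases hc with ⟨rfl, rfl⟩ | ⟨rfl, rfl⟩
    · left; constructor <;> rfl
    · right; constructor <;> rfl
  have hM2G : ∀ (u v : V) (hu : u ∈ Yᶜᶜ) (hv : v ∈ Yᶜᶜ),
      M2.Adj (Sum.inl ⟨u, hu⟩) (Sum.inl ⟨v, hv⟩) → G.Adj u v := by
    intro u v hu hv h
    exact (contract_adj_inl_inl hu hv).mp (M2.adj_sub h)
  refine ⟨⟨Set.univ,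
    fun u v => (∃ (hu : u ∈ Yᶜ) (hv : v ∈ Yᶜ), M1.Adj (Sum.inl ⟨u, hu⟩) (Sum.inl ⟨v, hv⟩)) ∨
      (∃ (hu : u ∈ Yᶜᶜ) (hv : v ∈ Yᶜᶜ), M2.Adj (Sum.inl ⟨u, hu⟩) (Sum.inl ⟨v, hv⟩)) ∨
      s(u, v) = s(a, b), ?_, fun _ => Set.mem_univ _, ?_⟩, ?_, ?_, ?_, ?_⟩
  · -- adj_sub
    rintro u v (⟨hu, hv, h⟩ | ⟨hu, hv, h⟩ | h)
    · obtain ⟨h1, h2⟩ := hM1G u v hu hv h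
      rw [deleteEdges_adj]; exact ⟨h1, by simpa using h2⟩
    · have h1 := hM2G u v hu hv h
      rw [deleteEdges_adj]
      refine ⟨h1, ?_⟩
      simp only [Set.mem_singleton_iff, Sym2.eq_iff]
      rintro (⟨h1', h2'⟩ | ⟨h1', h2'⟩)
      · exact (h1' ▸ hu) hx
      · exact (h1' ▸ hu) hy
    · rw [Sym2.eq_iff] at h
      rw [deleteEdges_adj]
      rcases h with ⟨rfl, rfl⟩ | ⟨rfl, rfl⟩
      · refine ⟨hab, ?_⟩
        simp only [Set.mem_singleton_iff, Sym2.eq_iff]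
        rintro (⟨h1', h2'⟩ | ⟨h1', h2'⟩)
        · exact hby h2'
        · exact hbx h2'
      · refine ⟨hab.symm, ?_⟩
        simp only [Set.mem_singleton_iff, Sym2.eq_iff]
        rintro (⟨h1', h2'⟩ | ⟨h1', h2'⟩)
        · exact hbx h1'
        · exact hby h1'
  · -- symm
    constructor; rintro u v (⟨hu, hv, h⟩ | ⟨hu, hv, h⟩ | h)
    · exact Or.inl ⟨hv, hu, h.symm⟩
    · exact Or.inr (Or.inl ⟨hv, hu, h.symm⟩)
    · exact Or.inr (Or.inr ((Sym2.eq_swap).trans h))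
  · -- IsPerfectMatching
    rw [Subgraph.isPerfectMatching_iff]
    intro v
    by_cases hv : v ∈ Yᶜ
    · by_cases hva : v = a
      · subst hva
        refine ⟨b, Or.inr (Or.inr rfl), ?_⟩
        rintro u (⟨hu, hw, h⟩ | ⟨hu, hw, h⟩ | h)
        · obtain ⟨w, -, huniq⟩ := hM1.1 (hM1.2 (Sum.inl (⟨v, ha⟩ : ↥(Yᶜ))))
          have h1 := huniq _ (show M1.Adj (Sum.inl ⟨v, ha⟩) (Sum.inl ⟨u, hw⟩) from h)
          have h2 := huniq _ hgM1
          exact absurd (h1.trans h2.symm) (by simp)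
        · exact absurd ha hu
        · rw [Sym2.eq_iff] at h
          rcases h with ⟨h1, h2⟩ | ⟨h1, h2⟩
          · exact h2
          · exact absurd h1 hane
      · obtain ⟨w, hw, huniq⟩ := hM1.1 (hM1.2 (Sum.inl (⟨v, hv⟩ : ↥(Yᶜ))))
        obtain ⟨q, rfl⟩ : ∃ q : ↥(Yᶜ), w = Sum.inl q := by
          cases w with
          | inl q => exact ⟨q, rfl⟩
          | inr u =>
            exfalso
            obtain ⟨w', -, huniq'⟩ := hM1.1 (hM1.2 (Sum.inr () : ↥(Yᶜ) ⊕ Unit))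
            have h1 := huniq' _ (show M1.Adj (Sum.inr ()) (Sum.inl ⟨v, hv⟩) from (by cases u; exact hw.symm))
            have h2 := huniq' _ hgM1.symm
            apply hva
            simpa [Subtype.ext_iff] using h1.trans h2.symm
        refine ⟨↑q, Or.inl ⟨hv, q.2, hw⟩, ?_⟩
        rintro u (⟨hu, hw', h⟩ | ⟨hu, hw', h⟩ | h)
        · have := huniq _ h
          simpa [Subtype.ext_iff] using this
        · exact absurd hv (by simpa using hu)
        · rw [Sym2.eq_iff] at h
          rcases h with ⟨h1, h2⟩ | ⟨h1, h2⟩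
          · exact absurd h1 hva
          · exact absurd (h1 ▸ hb) hv
    · have hvY : v ∈ Y := by simpa using hv
      have hvcc : v ∈ Yᶜᶜ := by simpa using hvY
      by_cases hvb : v = b
      · subst hvb
        refine ⟨a, Or.inr (Or.inr (Sym2.eq_swap)), ?_⟩
        rintro u (⟨hu, hw, h⟩ | ⟨hu, hw, h⟩ | h)
        · exact absurd hu hv
        · obtain ⟨w, -, huniq⟩ := hM2.1 (hM2.2 (Sum.inl (⟨v, hbb⟩ : ↥(Yᶜᶜ))))
          have h1 := huniq _ (show M2.Adj (Sum.inl ⟨v, hbb⟩) (Sum.inl ⟨u, hw⟩) from h)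
          have h2 := huniq _ hgM2
          exact absurd (h1.trans h2.symm) (by simp)
        · rw [Sym2.eq_iff] at h
          rcases h with ⟨h1, h2⟩ | ⟨h1, h2⟩
          · exact absurd h1.symm hane
          · exact h2
      · obtain ⟨w, hw, huniq⟩ := hM2.1 (hM2.2 (Sum.inl (⟨v, hvcc⟩ : ↥(Yᶜᶜ))))
        obtain ⟨q, rfl⟩ : ∃ q : ↥(Yᶜᶜ), w = Sum.inl q := by
          cases w with
          | inl q => exact ⟨q, rfl⟩
          | inr u =>
            exfalso
            obtain ⟨w', -, huniq'⟩ := hM2.1 (hM2.2 (Sum.inr () : ↥(Yᶜᶜ) ⊕ Unit))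
            have h1 := huniq' _ (show M2.Adj (Sum.inr ()) (Sum.inl ⟨v, hvcc⟩) from (by cases u; exact hw.symm))
            have h2 := huniq' _ hgM2.symm
            apply hvb
            simpa [Subtype.ext_iff] using h1.trans h2.symm
        refine ⟨↑q, Or.inr (Or.inl ⟨hvcc, q.2, hw⟩), ?_⟩
        rintro u (⟨hu, hw', h⟩ | ⟨hu, hw', h⟩ | h)
        · exact absurd hu hv
        · have := huniq _ h
          simpa [Subtype.ext_iff] using this
        · rw [Sym2.eq_iff] at h
          rcases h with ⟨h1, h2⟩ | ⟨h1, h2⟩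
          · exact absurd (h1 ▸ ha) hv
          · exact absurd h1 hvb
  · intro u v hu hv h
    exact Or.inl ⟨hu, hv, h⟩
  · intro u v hu hv h
    exact Or.inr (Or.inl ⟨hu, hv, h⟩)
  · exact Or.inr (Or.inr rfl)

end Glue
section EdgePM
variable {V : Type u}

/-- Get the partner of `Sum.inr ()` in a perfect matching of a contraction-type graph,
together with the underlying cut edge. -/
lemma exists_cut_partner {W : Type u} {G' : SimpleGraph (W ⊕ Unit)}
    {M : G'.Subgraph} (hM : M.IsPerfectMatching) :
    ∃ q : W, M.Adj (Sum.inl q) (Sum.inr ()) := by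
  obtain ⟨w, hw, -⟩ := hM.1 (hM.2 (Sum.inr () : W ⊕ Unit))
  cases w with
  | inl q => exact ⟨q, hw.symm⟩
  | inr u =>
    cases u
    exact absurd hw (fun h => M.loopless.irrefl _ h)

lemma edge_pm [Finite V] {G : SimpleGraph V} {Y : Set V} {x y : V}
    (hx : x ∈ Yᶜ) (hy : y ∈ Yᶜ) (hxy : G.Adj x y)
    (hY2 : MatchingCovered (contract G Yᶜ))
    (hrem : MatchingCovered ((contract G Y).deleteEdges {s(Sum.inl ⟨x, hx⟩, Sum.inl ⟨y, hy⟩)})) :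
    ∀ u v, G.Adj u v → s(u, v) ≠ s(x, y) →
      ∃ M : (G.deleteEdges {s(x, y)}).Subgraph, M.IsPerfectMatching ∧ M.Adj u v := by
  classical
  -- the two core cases
  have cut_edge_H1 : ∀ (a : V) (ha : a ∈ Yᶜ) (b : V), b ∈ Y → G.Adj a b →
      s(Sum.inl ⟨a, ha⟩, Sum.inr ()) ∈
        ((contract G Y).deleteEdges {s(Sum.inl ⟨x, hx⟩, Sum.inl ⟨y, hy⟩)}).edgeSet := by
    intro a ha b hb hab
    rw [mem_edgeSet, deleteEdges_adj]
    refine ⟨(contract_adj_inl_inr ha).mpr ⟨b, hb, hab⟩, ?_⟩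
    simp only [Set.mem_singleton_iff, Sym2.eq_iff]
    rintro (⟨h1, h2⟩ | ⟨h1, h2⟩) <;> simp at h1 h2
  have cut_edge_G2 : ∀ (b : V) (hbb : b ∈ Yᶜᶜ) (a : V), a ∈ Yᶜ → G.Adj a b →
      s(Sum.inl ⟨b, hbb⟩, Sum.inr ()) ∈ (contract G Yᶜ).edgeSet := by
    intro b hbb a ha hab
    rw [mem_edgeSet]
    exact (contract_adj_inl_inr hbb).mpr ⟨a, ha, hab.symm⟩
  -- core : u has some position, v too
  have core : ∀ u v, G.Adj u v → s(u, v) ≠ s(x, y) →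
      (u ∈ Yᶜ ∧ v ∈ Yᶜ) ∨ (u ∈ Y ∧ v ∈ Y) ∨ (u ∈ Yᶜ ∧ v ∈ Y) →
      ∃ M : (G.deleteEdges {s(x, y)}).Subgraph, M.IsPerfectMatching ∧ M.Adj u v := by
    rintro u v huv hne (⟨hu, hv⟩ | ⟨hu, hv⟩ | ⟨hu, hv⟩)
    · -- both outside Y : use M1 through the edge, then find its cut edge
      have himg : s(Sum.inl ⟨u, hu⟩, Sum.inl ⟨v, hv⟩) ∈
          ((contract G Y).deleteEdges {s(Sum.inl ⟨x, hx⟩, Sum.inl ⟨y, hy⟩)}).edgeSet := by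
        rw [mem_edgeSet, deleteEdges_adj]
        refine ⟨(contract_adj_inl_inl hu hv).mpr huv, ?_⟩
        simp only [Set.mem_singleton_iff, Sym2.eq_iff]
        rintro (⟨h1, h2⟩ | ⟨h1, h2⟩) <;> simp only [Sum.inl.injEq, Subtype.mk.injEq] at h1 h2
        · exact hne (by rw [Sym2.eq_iff]; exact Or.inl ⟨h1, h2⟩)
        · exact hne (by rw [Sym2.eq_iff]; exact Or.inr ⟨h1, h2⟩)
      obtain ⟨M1, hM1, hfM1⟩ := hrem.2.2 _ himg
      rw [Subgraph.mem_edgeSet] at hfM1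
      obtain ⟨q, hq⟩ := exists_cut_partner hM1
      have hq' := M1.adj_sub hq
      rw [deleteEdges_adj] at hq'
      obtain ⟨b, hb, hab⟩ := (contract_adj_inl_inr q.2).mp (by exact hq'.1)
      have hbb : b ∈ Yᶜᶜ := by simpa using hb
      obtain ⟨M2, hM2, hgM2⟩ := hY2.2.2 _ (cut_edge_G2 b hbb ↑q q.2 hab)
      rw [Subgraph.mem_edgeSet] at hgM2
      obtain ⟨M, hM, hc1, hc2, hMab⟩ := glue hx hy q.2 hb hbb hab hM1 hM2 (by exact hq) hgM2
      exact ⟨M, hM, hc1 u v hu hv hfM1⟩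
    · -- both inside Y : use M2 through the edge
      have hucc : u ∈ Yᶜᶜ := by simpa using hu
      have hvcc : v ∈ Yᶜᶜ := by simpa using hv
      have himg : s(Sum.inl ⟨u, hucc⟩, Sum.inl ⟨v, hvcc⟩) ∈ (contract G Yᶜ).edgeSet := by
        rw [mem_edgeSet]
        exact (contract_adj_inl_inl hucc hvcc).mpr huv
      obtain ⟨M2, hM2, hfM2⟩ := hY2.2.2 _ himg
      rw [Subgraph.mem_edgeSet] at hfM2
      obtain ⟨q, hq⟩ := exists_cut_partner hM2
      have hq' := M2.adj_sub hq
      obtain ⟨a, ha, hab⟩ := (contract_adj_inl_inr q.2).mp (by exact hq')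
      have hbY : (q : V) ∈ Y := by simpa using q.2
      obtain ⟨M1, hM1, hgM1⟩ := hrem.2.2 _ (cut_edge_H1 a ha ↑q hbY hab.symm)
      rw [Subgraph.mem_edgeSet] at hgM1
      obtain ⟨M, hM, hc1, hc2, hMab⟩ := glue hx hy ha hbY q.2 hab.symm hM1 hM2 hgM1 (by exact hq)
      exact ⟨M, hM, hc2 u v hucc hvcc hfM2⟩
    · -- cut edge : take it as the glue edge
      obtain ⟨M1, hM1, hgM1⟩ := hrem.2.2 _ (cut_edge_H1 u hu v hv huv)
      rw [Subgraph.mem_edgeSet] at hgM1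
      have hvcc : v ∈ Yᶜᶜ := by simpa using hv
      obtain ⟨M2, hM2, hgM2⟩ := hY2.2.2 _ (cut_edge_G2 v hvcc u hu huv)
      rw [Subgraph.mem_edgeSet] at hgM2
      obtain ⟨M, hM, hc1, hc2, hMab⟩ := glue hx hy hu hv hvcc huv hM1 hM2 hgM1 hgM2
      exact ⟨M, hM, hMab⟩
  intro u v huv hne
  by_cases hu : u ∈ Yᶜ <;> by_cases hv : v ∈ Yᶜ
  · exact core u v huv hne (Or.inl ⟨hu, hv⟩)
  · exact core u v huv hne (Or.inr (Or.inr ⟨hu, by simpa using hv⟩))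
  · obtain ⟨M, hM, hadj⟩ := core v u huv.symm (fun h => hne (Sym2.eq_swap.trans h))
      (Or.inr (Or.inr ⟨hv, by simpa using hu⟩))
    exact ⟨M, hM, hadj.symm⟩
  · exact core u v huv hne (Or.inr (Or.inl ⟨by simpa using hu, by simpa using hv⟩))

end EdgePM
section Conn
variable {V : Type u}

lemma even_card_closed [Finite V] {G : SimpleGraph V} {M : G.Subgraph}
    (hM : M.IsPerfectMatching) {S : Set V}
    (hS : ∀ v ∈ S, ∀ w, M.Adj v w → w ∈ S) : Even (Nat.card S) := by
  classical
  have : Fintype V := Fintype.ofFinite V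
  let N : G.Subgraph :=
    { verts := S, Adj := fun u v => u ∈ S ∧ v ∈ S ∧ M.Adj u v,
      adj_sub := fun h => M.adj_sub h.2.2, edge_vert := fun h => h.1,
      symm := ⟨fun u v h => ⟨h.2.1, h.1, h.2.2.symm⟩⟩ }
  have hN : N.IsMatching := by
    intro v hv
    obtain ⟨w, hw, huniq⟩ := hM.1 (hM.2 v)
    exact ⟨w, ⟨hv, hS v hv w hw, hw⟩, fun u hu => huniq u hu.2.2⟩
  have h1 := hN.even_card
  have h2 : Nat.card ↥S = N.verts.toFinset.card := by
    rw [Nat.card_coe_set_eq, Set.ncard_eq_toFinset_card']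
  rw [h2]
  exact h1

lemma conn_del [Finite V] {G : SimpleGraph V} {x y : V} (hG : MatchingCovered G)
    (hxy : G.Adj x y) {N0 : (G.deleteEdges {s(x, y)}).Subgraph}
    (hN0 : N0.IsPerfectMatching) : (G.deleteEdges {s(x, y)}).Connected := by
  classical
  have hreach : (G.deleteEdges {s(x, y)}).Reachable x y := by
    by_contra hcon
    set S : Set V := {v | (G.deleteEdges {s(x, y)}).Reachable x v} with hSdef
    have hxS : x ∈ S := Reachable.refl x
    have hyS : y ∉ S := hcon
    have hSclosed : ∀ v ∈ S, ∀ w, N0.Adj v w → w ∈ S :=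
      fun v hv w hw => hv.trans (N0.adj_sub hw).reachable
    have he1 := even_card_closed hN0 hSclosed
    obtain ⟨N, hN, heN⟩ := hG.2.2 s(x, y) ((SimpleGraph.mem_edgeSet G).mpr hxy)
    rw [Subgraph.mem_edgeSet] at heN
    have hS'closed : ∀ v ∈ S \ {x}, ∀ w, N.Adj v w → w ∈ S \ {x} := by
      rintro v ⟨hvS, hvx⟩ w hw
      simp only [Set.mem_singleton_iff] at hvx
      have hGvw := N.adj_sub hw
      have hwS : w ∈ S := by
        by_cases hvw : s(v, w) = s(x, y)
        · rw [Sym2.eq_iff] at hvw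
          rcases hvw with ⟨h1, h2⟩ | ⟨h1, h2⟩
          · exact absurd h1 hvx
          · exact absurd (h1 ▸ hvS) hyS
        · exact hvS.trans (SimpleGraph.Adj.reachable
            (by rw [deleteEdges_adj]; exact ⟨hGvw, by simpa using hvw⟩))
      refine ⟨hwS, ?_⟩
      simp only [Set.mem_singleton_iff]
      intro hwx
      subst hwx
      obtain ⟨w', -, huniq⟩ := hN.1 (hN.2 w)
      have h1 := huniq _ hw.symm
      have h2 := huniq _ heN
      have hvy : v = y := h1.trans h2.symm
      exact hyS (hvy ▸ hvS)
    have he2 := even_card_closed hN hS'closed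
    have hcard : Nat.card ↥S = Nat.card ↥(S \ {x}) + 1 := by
      rw [Nat.card_coe_set_eq, Nat.card_coe_set_eq,
        Set.ncard_diff_singleton_add_one hxS]
    rw [hcard] at he1
    exact (Nat.even_add_one.mp he1) he2
  have key : ∀ u v, G.Adj u v → (G.deleteEdges {s(x, y)}).Reachable u v := by
    intro u v huv
    by_cases h : s(u, v) = s(x, y)
    · rw [Sym2.eq_iff] at h
      rcases h with ⟨rfl, rfl⟩ | ⟨rfl, rfl⟩
      · exact hreach
      · exact hreach.symm
    · exact SimpleGraph.Adj.reachable
        (by rw [deleteEdges_adj]; exact ⟨huv, by simpa using h⟩)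
  have lift : ∀ u v, G.Reachable u v → (G.deleteEdges {s(x, y)}).Reachable u v := by
    intro u v hr
    obtain ⟨p⟩ := hr
    induction p with
    | nil => exact Reachable.refl _
    | cons h p ih => exact (key _ _ h).trans ih
  rw [connected_iff]
  exact ⟨fun u v => lift u v (hG.1.preconnected u v), ⟨x⟩⟩

end Conn
section Main
variable {V : Type u}

lemma main_case [Finite V] {G : SimpleGraph V} (Y : Set V) (hG : MatchingCovered G)
    (hY2 : MatchingCovered (contract G Yᶜ)) {x y : V} (hxy : G.Adj x y)
    (hx : x ∈ Yᶜ) (hy : y ∈ Yᶜ)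
    (hrem : MatchingCovered ((contract G Y).deleteEdges {s(Sum.inl ⟨x, hx⟩, Sum.inl ⟨y, hy⟩)})) :
    Removable G s(x, y) := by
  classical
  refine ⟨(SimpleGraph.mem_edgeSet G).mpr hxy, ?_, hG.2.1, ?_⟩
  · -- connectivity : first obtain some PM of G - e
    -- find a cut edge from connectivity of contract G Yᶜ
    have h2c : 2 ≤ Nat.card (↥(Yᶜᶜ) ⊕ Unit) := hY2.2.1
    have : Nontrivial (↥(Yᶜᶜ) ⊕ Unit) := Finite.one_lt_card_iff_nontrivial.mp (by omega)
    obtain ⟨w, hw⟩ := exists_ne (Sum.inr () : ↥(Yᶜᶜ) ⊕ Unit)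
    obtain ⟨p⟩ := hY2.1.preconnected (Sum.inr ()) w
    have hadj : ∃ z, (contract G Yᶜ).Adj (Sum.inr ()) z := by
      cases p with
      | nil => exact absurd rfl hw.symm
      | cons h p => exact ⟨_, h⟩
    obtain ⟨z, hz⟩ := hadj
    obtain ⟨q, rfl⟩ : ∃ q : ↥(Yᶜᶜ), z = Sum.inl q := by
      cases z with
      | inl q => exact ⟨q, rfl⟩
      | inr u => cases u; exact absurd hz (SimpleGraph.irrefl _)
    obtain ⟨a, ha, hab⟩ := (contract_adj_inl_inr q.2).mp hz.symm
    have hbY : (q : V) ∈ Y := by simpa using q.2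
    have hne : s(a, ↑q) ≠ s(x, y) := by
      intro hc
      rw [Sym2.eq_iff] at hc
      rcases hc with ⟨h1, h2⟩ | ⟨h1, h2⟩
      · exact (h2 ▸ hy) hbY
      · exact (h2 ▸ hx) hbY
    obtain ⟨N0, hN0, -⟩ := edge_pm hx hy hxy hY2 hrem a ↑q hab.symm hne
    exact conn_del hG hxy hN0
  · -- every edge in a PM
    intro f hf
    induction f with
    | _ u v =>
      rw [mem_edgeSet, deleteEdges_adj] at hf
      obtain ⟨huv, hne⟩ := hf
      simp only [Set.mem_singleton_iff] at hne
      obtain ⟨M, hM, hadj⟩ := edge_pm hx hy hxy hY2 hrem u v huv hne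
      exact ⟨M, hM, Subgraph.mem_edgeSet.mpr hadj⟩

theorem stmt6' {V : Type u} [Finite V] (G : SimpleGraph V) (X : Set V)
    (hG : MatchingCovered G) (hsep : IsSeparatingCut G X)
    (x y : V) (he : G.Adj x y) (hnC : s(x, y) ∉ cutEdges G X)
    (h1 : RemovableExt (contract G X) (Sym2.map (toContract X) s(x, y)))
    (h2 : RemovableExt (contract G Xᶜ) (Sym2.map (toContract Xᶜ) s(x, y))) :
    Removable G s(x, y) := by
  classical
  have hiff : (x ∈ X ↔ y ∈ X) := by
    constructor
    · intro hx
      by_contra hy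
      exact hnC ⟨(SimpleGraph.mem_edgeSet G).mpr he, x, y, rfl, hx, hy⟩
    · intro hy
      by_contra hx
      exact hnC ⟨(SimpleGraph.mem_edgeSet G).mpr he, y, x, Sym2.eq_swap, hy, hx⟩
  by_cases hxX : x ∈ X
  · -- both in X : use Y := Xᶜ
    have hyX : y ∈ X := hiff.mp hxX
    have hx' : x ∈ Xᶜᶜ := by simpa using hxX
    have hy' : y ∈ Xᶜᶜ := by simpa using hyX
    have himg : Sym2.map (toContract Xᶜ) s(x, y) = s(Sum.inl ⟨x, hx'⟩, Sum.inl ⟨y, hy'⟩) := by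
      rw [Sym2.map_pair_eq, toContract_of_not_mem hx', toContract_of_not_mem hy']
    have hY2 : MatchingCovered (contract G Xᶜᶜ) := by
      have key : ∀ (Z : Set V), Z = X → MatchingCovered (contract G Z) := by
        intro Z hZ; subst hZ; exact hsep.1
      exact key _ (compl_compl X)
    have hmem : Sym2.map (toContract Xᶜ) s(x, y) ∈ (contract G Xᶜ).edgeSet := by
      rw [himg, mem_edgeSet]
      exact (contract_adj_inl_inl hx' hy').mpr he
    have hrem : Removable (contract G Xᶜ) (Sym2.map (toContract Xᶜ) s(x, y)) := by
      rcases h2 with h | h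
      · exact absurd hmem h
      · exact h
    have := hrem.2
    rw [himg] at this
    exact main_case Xᶜ hG hY2 he hx' hy' this
  · have hyX : y ∉ X := fun h => hxX (hiff.mpr h)
    have hx' : x ∈ Xᶜ := hxX
    have hy' : y ∈ Xᶜ := hyX
    have himg : Sym2.map (toContract X) s(x, y) = s(Sum.inl ⟨x, hx'⟩, Sum.inl ⟨y, hy'⟩) := by
      rw [Sym2.map_pair_eq, toContract_of_not_mem hx', toContract_of_not_mem hy']
    have hmem : Sym2.map (toContract X) s(x, y) ∈ (contract G X).edgeSet := by
      rw [himg, mem_edgeSet]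
      exact (contract_adj_inl_inl hx' hy').mpr he
    have hrem : Removable (contract G X) (Sym2.map (toContract X) s(x, y)) := by
      rcases h1 with h | h
      · exact absurd hmem h
      · exact h
    have := hrem.2
    rw [himg] at this
    exact main_case X hG hsep.2 he hx' hy' this

end Main

theorem stmt6 {V : Type u} [Finite V] (G : SimpleGraph V) (X : Set V)
    (hG : MatchingCovered G) (hsep : IsSeparatingCut G X)
    (x y : V) (he : G.Adj x y) (hnC : s(x, y) ∉ cutEdges G X)
    (h1 : RemovableExt (contract G X) (Sym2.map (toContract X) s(x, y)))
    (h2 : RemovableExt (contract G Xᶜ) (Sym2.map (toContract Xᶜ) s(x, y))) :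
    Removable G s(x, y) :=
  stmt6' G X hG hsep x y he hnC h1 h2
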